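/- For every ε > 0, h > 0 and every stopping time τ₀ ∈ 𝒯, one has |Y_{τ₀} − E[U(ρ_h(τ₀), τ₀) | 𝓕_{τ₀}]| ≤ 3 r(h) + ε almost surely, where Y_{τ₀} := ess sup_{σ∈𝒯_{τ₀}} E[U(σ, τ₀) | 𝓕_{τ₀}]. -/

import Mathlib

/-!
Common setup for "On the non-zero-sum stopping game ending at the maximum of the stopping
strategies".  Time is indexed by `[0,∞] = ℝ≥0∞`.  Since `Ω` is at most countable and `ℙ`
charges every point, essential suprema/infima over families of stopping times coincide with
the pointwise ones, which is how they are formalized below.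
-/

open MeasureTheory Filter Set
open scoped ENNReal Topology

noncomputable section

namespace StoppingGames

variable {Ω : Type*} [mΩ : MeasurableSpace Ω]

/-- `|a - b|` on `[0,∞]`, via truncated subtraction. -/
def dd (a b : ℝ≥0∞) : ℝ≥0∞ := (a - b) + (b - a)

/-- `𝒯`, the set of stopping times with values in `[0,∞]`. -/
def ST (𝓕 : Filtration ℝ≥0∞ mΩ) : Set (Ω → ℝ≥0∞) := {τ | IsStoppingTime 𝓕 (fun ω => (τ ω : WithTop ℝ≥0∞))}

/-- `𝒯_σ`, the stopping times no less than `σ`. -/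
def STge (𝓕 : Filtration ℝ≥0∞ mΩ) (σ : Ω → ℝ≥0∞) : Set (Ω → ℝ≥0∞) :=
  {τ | IsStoppingTime 𝓕 (fun ω => (τ ω : WithTop ℝ≥0∞)) ∧ ∀ ω, σ ω ≤ τ ω}

/-- `𝒯_{t+}`, the stopping times strictly greater than `t`. -/
def STgt (𝓕 : Filtration ℝ≥0∞ mΩ) (t : ℝ≥0∞) : Set (Ω → ℝ≥0∞) :=
  {τ | IsStoppingTime 𝓕 (fun ω => (τ ω : WithTop ℝ≥0∞)) ∧ ∀ ω, t < τ ω}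

/-- The class `𝕋` of jointly measurable maps `φ : [0,∞] × Ω → [0,∞]` with
`φ(t,·) ∈ 𝒯_{t+}` for every finite `t`. -/
def IsTT (𝓕 : Filtration ℝ≥0∞ mΩ) (φ : ℝ≥0∞ → Ω → ℝ≥0∞) : Prop :=
  Measurable (Function.uncurry φ) ∧ ∀ t : ℝ≥0∞, t ≠ ∞ → φ t ∈ STgt 𝓕 t

/-- A stopping strategy `ρ = (ρ₀, ρ₁) ∈ 𝔗`. -/
def IsStrategy (𝓕 : Filtration ℝ≥0∞ mΩ) (ρ : (Ω → ℝ≥0∞) × (ℝ≥0∞ → Ω → ℝ≥0∞)) : Prop :=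
  IsStoppingTime 𝓕 (fun ω => (ρ.1 ω : WithTop ℝ≥0∞)) ∧ IsTT 𝓕 ρ.2

/-- `𝔗_σ`, the stopping strategies whose first component is `≥ σ`. -/
def IsStrategyGe (𝓕 : Filtration ℝ≥0∞ mΩ) (σ : Ω → ℝ≥0∞)
    (ρ : (Ω → ℝ≥0∞) × (ℝ≥0∞ → Ω → ℝ≥0∞)) : Prop :=
  IsStrategy 𝓕 ρ ∧ ∀ ω, σ ω ≤ ρ.1 ω

/-- `ρ[τ] = ρ₀ 1_{ρ₀ ≤ τ₀} + ρ₁(τ₀) 1_{ρ₀ > τ₀}`. -/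
def play (ρ τ : (Ω → ℝ≥0∞) × (ℝ≥0∞ → Ω → ℝ≥0∞)) : Ω → ℝ≥0∞ := fun ω =>
  if ρ.1 ω ≤ τ.1 ω then ρ.1 ω else ρ.2 (τ.1 ω) ω

/-- `u(ρ,τ) = E[U(ρ[τ], τ[ρ])]`. -/
def payoff (μ : Measure Ω) (U : ℝ≥0∞ → ℝ≥0∞ → Ω → ℝ)
    (ρ τ : (Ω → ℝ≥0∞) × (ℝ≥0∞ → Ω → ℝ≥0∞)) : ℝ :=
  ∫ ω, U (play ρ τ ω) (play τ ρ ω) ω ∂μ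

/-- `u_σ(ρ,τ) = E[U(ρ[τ], τ[ρ]) | m]`. -/
def condPayoff (μ : Measure Ω) (m : MeasurableSpace Ω) (U : ℝ≥0∞ → ℝ≥0∞ → Ω → ℝ)
    (ρ τ : (Ω → ℝ≥0∞) × (ℝ≥0∞ → Ω → ℝ≥0∞)) : Ω → ℝ :=
  μ[fun ω => U (play ρ τ ω) (play τ ρ ω) ω | m]

/-- The grid point `n·h ∈ [0,∞]`. -/
def grid (h : ℝ) (n : ℕ) : ℝ≥0∞ := ENNReal.ofReal (n * h)

/-- `⌊t/h⌋ + 1`. -/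
def gridIdx (h : ℝ) (t : ℝ≥0∞) : ℕ := ⌊t.toReal / h⌋₊ + 1

/-- `ρ_h(t) := ρ̄((⌊t/h⌋+1)h)` for finite `t`, and `ρ_h(∞) := ∞`. -/
def gridStrat (h : ℝ) (bar : ℕ → Ω → ℝ≥0∞) : ℝ≥0∞ → Ω → ℝ≥0∞ := fun t ω =>
  if t = ∞ then ∞ else bar (gridIdx h t) ω

/-- Evaluation `φ(σ) : ω ↦ φ(σ(ω), ω)` of a time-indexed family along a random time. -/
def evalAt (φ : ℝ≥0∞ → Ω → ℝ≥0∞) (σ : Ω → ℝ≥0∞) : Ω → ℝ≥0∞ := fun ω => φ (σ ω) ω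

/-- `X_t = ess inf_{σ ∈ 𝒯_t} E[U(t,σ) | 𝓕_t]` (pointwise infimum, which coincides with the
essential one since `Ω` is countable and every point is charged). -/
def X1v (μ : Measure Ω) (𝓕 : Filtration ℝ≥0∞ mΩ) (U : ℝ≥0∞ → ℝ≥0∞ → Ω → ℝ)
    (t : ℝ≥0∞) (ω : Ω) : ℝ :=
  ⨅ σ : STge 𝓕 (fun _ => t), (μ[fun ω' => U t (σ.1 ω') ω' | 𝓕 t]) ω

/-- `Y_t = ess sup_{σ ∈ 𝒯_t} E[U(σ,t) | 𝓕_t]`. -/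
def Y1v (μ : Measure Ω) (𝓕 : Filtration ℝ≥0∞ mΩ) (U : ℝ≥0∞ → ℝ≥0∞ → Ω → ℝ)
    (t : ℝ≥0∞) (ω : Ω) : ℝ :=
  ⨆ σ : STge 𝓕 (fun _ => t), (μ[fun ω' => U (σ.1 ω') t ω' | 𝓕 t]) ω

/-- Player 2: `X²_t = ess sup_{σ ∈ 𝒯_t} E[U²(t,σ) | 𝓕_t]`. -/
def X2v (μ : Measure Ω) (𝓕 : Filtration ℝ≥0∞ mΩ) (U : ℝ≥0∞ → ℝ≥0∞ → Ω → ℝ)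
    (t : ℝ≥0∞) (ω : Ω) : ℝ :=
  ⨆ σ : STge 𝓕 (fun _ => t), (μ[fun ω' => U t (σ.1 ω') ω' | 𝓕 t]) ω

/-- Player 2: `Y²_t = ess inf_{σ ∈ 𝒯_t} E[U²(σ,t) | 𝓕_t]`. -/
def Y2v (μ : Measure Ω) (𝓕 : Filtration ℝ≥0∞ mΩ) (U : ℝ≥0∞ → ℝ≥0∞ → Ω → ℝ)
    (t : ℝ≥0∞) (ω : Ω) : ℝ :=
  ⨅ σ : STge 𝓕 (fun _ => t), (μ[fun ω' => U (σ.1 ω') t ω' | 𝓕 t]) ω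

/-- `Z_t = U(t,t)`. -/
def Zv (U : ℝ≥0∞ → ℝ≥0∞ → Ω → ℝ) : ℝ≥0∞ → Ω → ℝ := fun t ω => U t t ω

/-- `X_{ρ₀} 1_{ρ₀ < τ₀} + Y_{τ₀} 1_{ρ₀ > τ₀} + Z_{ρ₀} 1_{ρ₀ = τ₀}`. -/
def dynkinKernel (X Y Z : ℝ≥0∞ → Ω → ℝ) (ρ₀ τ₀ : Ω → ℝ≥0∞) (ω : Ω) : ℝ :=
  if ρ₀ ω < τ₀ ω then X (ρ₀ ω) ω else if τ₀ ω < ρ₀ ω then Y (τ₀ ω) ω else Z (ρ₀ ω) ω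

/-- The Dynkin-game payoff `V(ρ₀,τ₀)`. -/
def dynkinV (μ : Measure Ω) (X Y Z : ℝ≥0∞ → Ω → ℝ) (ρ₀ τ₀ : Ω → ℝ≥0∞) : ℝ :=
  ∫ ω, dynkinKernel X Y Z ρ₀ τ₀ ω ∂μ

/-- The conditional Dynkin-game payoff. -/
def condDynkin (μ : Measure Ω) (m : MeasurableSpace Ω) (X Y Z : ℝ≥0∞ → Ω → ℝ)
    (ρ₀ τ₀ : Ω → ℝ≥0∞) : Ω → ℝ :=
  μ[fun ω => dynkinKernel X Y Z ρ₀ τ₀ ω | m]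

/-- `v_t¹`, the (sup-inf) value of the conditional Dynkin game `G_t¹` with payoffs
`(X¹, Y¹, Z¹)` built from `U¹`. -/
def v1v (μ : Measure Ω) (𝓕 : Filtration ℝ≥0∞ mΩ) (U : ℝ≥0∞ → ℝ≥0∞ → Ω → ℝ)
    (t : ℝ≥0∞) (ω : Ω) : ℝ :=
  ⨆ ρ₀ : STge 𝓕 (fun _ => t), ⨅ τ₀ : STge 𝓕 (fun _ => t),
    condDynkin μ (𝓕 t) (X1v μ 𝓕 U) (Y1v μ 𝓕 U) (Zv U) ρ₀.1 τ₀.1 ω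

/-- `v_t²`, the (inf-sup) value of the conditional Dynkin game `G_t²` with payoffs
`(X², Y², Z²)` built from `U²`. -/
def v2v (μ : Measure Ω) (𝓕 : Filtration ℝ≥0∞ mΩ) (U : ℝ≥0∞ → ℝ≥0∞ → Ω → ℝ)
    (t : ℝ≥0∞) (ω : Ω) : ℝ :=
  ⨅ ρ₀ : STge 𝓕 (fun _ => t), ⨆ τ₀ : STge 𝓕 (fun _ => t),
    condDynkin μ (𝓕 t) (X2v μ 𝓕 U) (Y2v μ 𝓕 U) (Zv U) ρ₀.1 τ₀.1 ω

/-- `W_t¹ = E[U¹(t, τ_h²(t)) | 𝓕_t]`. -/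
def W1v (μ : Measure Ω) (𝓕 : Filtration ℝ≥0∞ mΩ) (U : ℝ≥0∞ → ℝ≥0∞ → Ω → ℝ)
    (h : ℝ) (bar : ℕ → Ω → ℝ≥0∞) (t : ℝ≥0∞) (ω : Ω) : ℝ :=
  (μ[fun ω' => U t (gridStrat h bar t ω') ω' | 𝓕 t]) ω

/-- `W_t² = E[U²(ρ_h¹(t), t) | 𝓕_t]`. -/
def W2v (μ : Measure Ω) (𝓕 : Filtration ℝ≥0∞ mΩ) (U : ℝ≥0∞ → ℝ≥0∞ → Ω → ℝ)
    (h : ℝ) (bar : ℕ → Ω → ℝ≥0∞) (t : ℝ≥0∞) (ω : Ω) : ℝ :=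
  (μ[fun ω' => U (gridStrat h bar t ω') t ω' | 𝓕 t]) ω

/-- `μ₁ = inf {t ≥ 0 : v_t¹ ≤ W_t¹ + ε}`. -/
def mu1T (μ : Measure Ω) (𝓕 : Filtration ℝ≥0∞ mΩ) (U : ℝ≥0∞ → ℝ≥0∞ → Ω → ℝ)
    (h ε : ℝ) (bar : ℕ → Ω → ℝ≥0∞) : Ω → ℝ≥0∞ := fun ω =>
  sInf {t | v1v μ 𝓕 U t ω ≤ W1v μ 𝓕 U h bar t ω + ε}

/-- `μ₂ = inf {t ≥ 0 : v_t² ≤ W_t² + ε}`. -/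
def mu2T (μ : Measure Ω) (𝓕 : Filtration ℝ≥0∞ mΩ) (U : ℝ≥0∞ → ℝ≥0∞ → Ω → ℝ)
    (h ε : ℝ) (bar : ℕ → Ω → ℝ≥0∞) : Ω → ℝ≥0∞ := fun ω =>
  sInf {t | v2v μ 𝓕 U t ω ≤ W2v μ 𝓕 U h bar t ω + ε}

/-- `ρ̄(nh)` is a family of `ε`-optimizers for `Y¹_{nh}`:
`E[U(ρ̄(nh), nh) | 𝓕_{nh}] ≥ Y_{nh} − ε`. -/
def IsOptRho1 (μ : Measure Ω) (𝓕 : Filtration ℝ≥0∞ mΩ) (U : ℝ≥0∞ → ℝ≥0∞ → Ω → ℝ)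
    (ε h : ℝ) (bar : ℕ → Ω → ℝ≥0∞) : Prop :=
  ∀ n : ℕ, bar n ∈ STge 𝓕 (fun _ => grid h n) ∧
    ∀ᵐ ω ∂μ, Y1v μ 𝓕 U (grid h n) ω - ε ≤
      (μ[fun ω' => U (bar n ω') (grid h n) ω' | 𝓕 (grid h n)]) ω

/-- `τ̄(nh)` is a family of `ε`-optimizers for `X¹_{nh}`:
`E[U(nh, τ̄(nh)) | 𝓕_{nh}] ≤ X_{nh} + ε`. -/
def IsOptTau1 (μ : Measure Ω) (𝓕 : Filtration ℝ≥0∞ mΩ) (U : ℝ≥0∞ → ℝ≥0∞ → Ω → ℝ)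
    (ε h : ℝ) (bar : ℕ → Ω → ℝ≥0∞) : Prop :=
  ∀ n : ℕ, bar n ∈ STge 𝓕 (fun _ => grid h n) ∧
    ∀ᵐ ω ∂μ, (μ[fun ω' => U (grid h n) (bar n ω') ω' | 𝓕 (grid h n)]) ω ≤
      X1v μ 𝓕 U (grid h n) ω + ε

/-- `ρ̄²(nh)` is a family of `ε`-optimizers for `Y²_{nh}` (an essential infimum). -/
def IsOptRho2 (μ : Measure Ω) (𝓕 : Filtration ℝ≥0∞ mΩ) (U : ℝ≥0∞ → ℝ≥0∞ → Ω → ℝ)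
    (ε h : ℝ) (bar : ℕ → Ω → ℝ≥0∞) : Prop :=
  ∀ n : ℕ, bar n ∈ STge 𝓕 (fun _ => grid h n) ∧
    ∀ᵐ ω ∂μ, (μ[fun ω' => U (bar n ω') (grid h n) ω' | 𝓕 (grid h n)]) ω ≤
      Y2v μ 𝓕 U (grid h n) ω + ε

/-- `τ̄²(nh)` is a family of `ε`-optimizers for `X²_{nh}` (an essential supremum). -/
def IsOptTau2 (μ : Measure Ω) (𝓕 : Filtration ℝ≥0∞ mΩ) (U : ℝ≥0∞ → ℝ≥0∞ → Ω → ℝ)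
    (ε h : ℝ) (bar : ℕ → Ω → ℝ≥0∞) : Prop :=
  ∀ n : ℕ, bar n ∈ STge 𝓕 (fun _ => grid h n) ∧
    ∀ᵐ ω ∂μ, X2v μ 𝓕 U (grid h n) ω - ε ≤
      (μ[fun ω' => U (grid h n) (bar n ω') ω' | 𝓕 (grid h n)]) ω

/-- The standing assumptions on the filtered probability space: `ℙ` charges every point of the
(countable) `Ω`, the filtration is right continuous (usual conditions; completeness is automatic
since null sets are empty), and `𝓕 = 𝓕_∞ = ⋃_{t<∞} 𝓕_t`. -/
def UsualSetup (μ : Measure Ω) (𝓕 : Filtration ℝ≥0∞ mΩ) : Prop :=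
  (∀ ω : Ω, μ {ω} ≠ 0) ∧
  (∀ t : ℝ≥0∞, (𝓕 t : MeasurableSpace Ω) = ⨅ s ∈ Ioi t, (𝓕 s : MeasurableSpace Ω)) ∧
  ((𝓕 ∞ : MeasurableSpace Ω) = mΩ) ∧
  ((⨆ t ∈ Iio (∞ : ℝ≥0∞), (𝓕 t : MeasurableSpace Ω)) = mΩ)

/-- The standing assumptions on a payoff `U`: boundedness, `𝓕_{s∨t}`-measurability of `U(s,t)`,
and the uniform-continuity modulus `r` (bounded, nondecreasing, `r(0+) = r(0) = 0`).  Note that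
the modulus condition, being imposed on all of `[0,∞]`, encodes that the values at `∞` are the
corresponding limits. -/
def PayoffAssumption (𝓕 : Filtration ℝ≥0∞ mΩ) (U : ℝ≥0∞ → ℝ≥0∞ → Ω → ℝ)
    (r : ℝ≥0∞ → ℝ) : Prop :=
  (∃ M : ℝ, ∀ s t ω, |U s t ω| ≤ M) ∧
  (∀ s t : ℝ≥0∞, Measurable[𝓕 (s ⊔ t)] (U s t)) ∧
  Monotone r ∧ (∀ x, 0 ≤ r x) ∧ (∃ C : ℝ, ∀ x, r x ≤ C) ∧ r 0 = 0 ∧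
  Tendsto r (𝓝[>] (0 : ℝ≥0∞)) (𝓝 (0 : ℝ)) ∧
  (∀ s t s' t' : ℝ≥0∞, ∀ ω, |U s t ω - U s' t' ω| ≤ r (dd s s' + dd t t'))

/-- The values of `U` at `∞` are the limits of the values at finite times. -/
def LimitsAtInfty (U : ℝ≥0∞ → ℝ≥0∞ → Ω → ℝ) : Prop :=
  (∀ s ω, Tendsto (fun b => U s b ω) (𝓝[<] (∞ : ℝ≥0∞)) (𝓝 (U s ∞ ω))) ∧
  (∀ t ω, Tendsto (fun a => U a t ω) (𝓝[<] (∞ : ℝ≥0∞)) (𝓝 (U ∞ t ω))) ∧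
  (∀ ω, Tendsto (fun p : ℝ≥0∞ × ℝ≥0∞ => U p.1 p.2 ω)
    ((𝓝[<] (∞ : ℝ≥0∞)) ×ˢ (𝓝[<] (∞ : ℝ≥0∞))) (𝓝 (U ∞ ∞ ω)))

/-- `ess inf_{σ ∈ 𝒯_v} E[U(s,σ) | 𝓕_v]` for a stopping time `v`. -/
def XatST (μ : Measure Ω) (𝓕 : Filtration ℝ≥0∞ mΩ) (U : ℝ≥0∞ → ℝ≥0∞ → Ω → ℝ)
    {v : Ω → ℝ≥0∞} (hv : IsStoppingTime 𝓕 (fun ω => (v ω : WithTop ℝ≥0∞))) (s : ℝ≥0∞) (ω : Ω) : ℝ :=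
  ⨅ σ : STge 𝓕 v, (μ[fun ω' => U s (σ.1 ω') ω' | hv.measurableSpace]) ω

/-- `X̃_v(s) = ess inf_{σ ∈ 𝒯_v} E[U(s,σ) | 𝓕_v]` for a deterministic time `v`. -/
def Xat (μ : Measure Ω) (𝓕 : Filtration ℝ≥0∞ mΩ) (U : ℝ≥0∞ → ℝ≥0∞ → Ω → ℝ)
    (v s : ℝ≥0∞) (ω : Ω) : ℝ :=
  ⨅ σ : STge 𝓕 (fun _ => v), (μ[fun ω' => U s (σ.1 ω') ω' | 𝓕 v]) ω

/-- `ρ₀* = μ₁ 1_{μ₁ ≤ μ₂} + ρ²_{μ₂+δ} 1_{μ₁ > μ₂}`. -/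
def rhoStar0 (m1 m2 rsad2 : Ω → ℝ≥0∞) : Ω → ℝ≥0∞ := fun ω =>
  if m1 ω ≤ m2 ω then m1 ω else rsad2 ω

/-- `ρ₁*(t) = ρ_h²(t)` if `t ≥ μ₁ ∧ μ₂ + δ` and `μ₁ > μ₂`, else `ρ_h¹(t)`. -/
def rhoStar1 (m1 m2 : Ω → ℝ≥0∞) (δ : ℝ) (φ1 φ2 : ℝ≥0∞ → Ω → ℝ≥0∞) :
    ℝ≥0∞ → Ω → ℝ≥0∞ := fun t ω =>
  if (m1 ω ⊓ m2 ω) + ENNReal.ofReal δ ≤ t ∧ m2 ω < m1 ω then φ2 t ω else φ1 t ω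

/-- `τ₀* = τ¹_{μ₁+δ} 1_{μ₁ ≤ μ₂} + μ₂ 1_{μ₁ > μ₂}`. -/
def tauStar0 (m1 m2 tsad1 : Ω → ℝ≥0∞) : Ω → ℝ≥0∞ := fun ω =>
  if m1 ω ≤ m2 ω then tsad1 ω else m2 ω

/-- `τ₁*(t) = τ_h¹(t)` if `t ≥ μ₁ ∧ μ₂ + δ` and `μ₁ ≤ μ₂`, else `τ_h²(t)`. -/
def tauStar1 (m1 m2 : Ω → ℝ≥0∞) (δ : ℝ) (ψ1 ψ2 : ℝ≥0∞ → Ω → ℝ≥0∞) :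
    ℝ≥0∞ → Ω → ℝ≥0∞ := fun t ω =>
  if (m1 ω ⊓ m2 ω) + ENNReal.ofReal δ ≤ t ∧ m1 ω ≤ m2 ω then ψ1 t ω else ψ2 t ω

/-! ### Auxiliary lemmas -/

section Aux

variable {Ω : Type*} [mΩ : MeasurableSpace Ω] [Countable Ω] {μ : Measure Ω}

omit [Countable Ω] in
lemma ae_all (hμ : ∀ ω : Ω, μ {ω} ≠ 0) {p : Ω → Prop} (h : ∀ᵐ ω ∂μ, p ω) : ∀ ω, p ω := by
  intro ω
  by_contra hω
  rw [ae_iff] at h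
  exact hμ ω (le_antisymm (h ▸ measure_mono (singleton_subset_iff.2 hω)) zero_le)

omit [Countable Ω] in
lemma ae_restrict_all (hμ : ∀ ω : Ω, μ {ω} ≠ 0) {s : Set Ω} (hs : MeasurableSet s)
    {p : Ω → Prop} (h : ∀ᵐ ω ∂μ.restrict s, p ω) : ∀ ω ∈ s, p ω := by
  intro ω hωs
  by_contra hω
  rw [ae_iff, Measure.restrict_apply' hs] at h
  exact hμ ω (le_antisymm (h ▸ measure_mono (singleton_subset_iff.2 ⟨hω, hωs⟩)) zero_le)

lemma st_eq_meas {𝓕 : Filtration ℝ≥0∞ mΩ} {τ : Ω → ℝ≥0∞} (hτ : IsStoppingTime 𝓕 (fun ω => (τ ω : WithTop ℝ≥0∞)))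
    (a : ℝ≥0∞) : MeasurableSet {ω | τ ω = a} := by
  have := 𝓕.le a _ (hτ.measurableSet_eq_of_countable_range (Set.countable_range _) a)
  simpa only [WithTop.coe_eq_coe] using this

lemma meas_comp {𝓕 : Filtration ℝ≥0∞ mΩ} {U : ℝ≥0∞ → ℝ≥0∞ → Ω → ℝ}
    (hU2 : ∀ s t : ℝ≥0∞, Measurable[𝓕 (s ⊔ t)] (U s t)) {f g : Ω → ℝ≥0∞}
    (hf : ∀ a, MeasurableSet {ω | f ω = a}) (hg : ∀ b, MeasurableSet {ω | g ω = b}) :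
    Measurable fun ω => U (f ω) (g ω) ω := by
  intro t ht
  have : (fun ω => U (f ω) (g ω) ω) ⁻¹' t =
      ⋃ a ∈ Set.range f, ⋃ b ∈ Set.range g,
        ({ω | f ω = a} ∩ {ω | g ω = b} ∩ U a b ⁻¹' t) := by
    ext ω
    simp only [Set.mem_preimage, Set.mem_iUnion, Set.mem_inter_iff, Set.mem_setOf_eq]
    constructor
    · intro hω
      exact ⟨f ω, ⟨ω, rfl⟩, g ω, ⟨ω, rfl⟩, ⟨rfl, rfl⟩, hω⟩
    · rintro ⟨a, -, b, -, ⟨rfl, rfl⟩, hω⟩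
      exact hω
  rw [this]
  refine MeasurableSet.biUnion (Set.countable_range f) fun a _ => ?_
  refine MeasurableSet.biUnion (Set.countable_range g) fun b _ => ?_
  exact ((hf a).inter (hg b)).inter (((hU2 a b).mono (𝓕.le _) le_rfl) ht)

omit [Countable Ω] in
lemma integrable_of_bdd {f : Ω → ℝ} {M : ℝ} [IsFiniteMeasure μ] (hf : Measurable f)
    (hM : ∀ ω, |f ω| ≤ M) : Integrable f μ :=
  (integrable_const M).mono' hf.aestronglyMeasurable
    (Eventually.of_forall fun ω => by simpa using hM ω)

omit [Countable Ω] in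
lemma condexp_eq_on (hμ : ∀ ω : Ω, μ {ω} ≠ 0) {m : MeasurableSpace Ω} (hm : m ≤ mΩ)
    [SigmaFinite (μ.trim hm)] {f g : Ω → ℝ} (hfi : Integrable f μ) (hgi : Integrable g μ)
    {s : Set Ω} (hs : MeasurableSet[m] s) (hfg : ∀ ω ∈ s, f ω = g ω) :
    ∀ ω ∈ s, (μ[f|m]) ω = (μ[g|m]) ω := by
  have h0 : f - g =ᵐ[μ.restrict s] 0 :=
    ae_restrict_of_forall_mem (hm _ hs) fun ω hω => by
      simp [Pi.sub_apply, hfg ω hω]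
  have h1 : μ[f - g|m] =ᵐ[μ.restrict s] 0 := condExp_ae_eq_restrict_zero hs h0
  have h2 : μ[f - g|m] =ᵐ[μ] μ[f|m] - μ[g|m] := condExp_sub hfi hgi m
  have h2x : μ[f - g|m] =ᵐ[μ.restrict s] μ[f|m] - μ[g|m] := ae_restrict_of_ae h2
  have h3 : μ[f|m] - μ[g|m] =ᵐ[μ.restrict s] 0 := h2x.symm.trans h1
  intro ω hω
  have := ae_restrict_all (mΩ := mΩ) hμ (hm _ hs) h3 ω hω
  simpa [sub_eq_zero] using this

omit [Countable Ω] in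
lemma condexp_le_add_const (hμ : ∀ ω : Ω, μ {ω} ≠ 0) {m : MeasurableSpace Ω} (hm : m ≤ mΩ)
    [IsFiniteMeasure μ] [SigmaFinite (μ.trim hm)] {f g : Ω → ℝ} {c : ℝ}
    (hfi : Integrable f μ) (hgi : Integrable g μ)
    (hfg : ∀ ω, f ω ≤ g ω + c) : ∀ ω, (μ[f|m]) ω ≤ (μ[g|m]) ω + c := by
  have h1 : μ[f|m] ≤ᵐ[μ] μ[fun ω => g ω + c|m] :=
    condExp_mono hfi (hgi.add (integrable_const c)) (Eventually.of_forall hfg)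
  have h2 : μ[fun ω => g ω + c|m] =ᵐ[μ] μ[g|m] + μ[fun _ => c|m] :=
    condExp_add hgi (integrable_const c) m
  have h3 : μ[fun _ : Ω => c|m] = fun _ => c := condExp_const hm c
  have := ae_all (mΩ := mΩ) hμ (h1.and h2)
  intro ω
  obtain ⟨hω1, hω2⟩ := this ω
  calc (μ[f|m]) ω ≤ (μ[fun ω => g ω + c|m]) ω := hω1
    _ = (μ[g|m]) ω + c := by rw [hω2, Pi.add_apply, h3]

omit [Countable Ω] in
lemma condexp_bdd (hμ : ∀ ω : Ω, μ {ω} ≠ 0) {m : MeasurableSpace Ω}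
    {f : Ω → ℝ} {M : ℝ} (hM : ∀ ω, |f ω| ≤ M) (ω : Ω) : (μ[f|m]) ω ≤ max M 0 := by
  have h : ∀ᵐ x ∂μ, |f x| ≤ (M.toNNReal : ℝ) :=
    Eventually.of_forall fun x => (hM x).trans (Real.le_coe_toNNReal M)
  have := ae_all (mΩ := mΩ) hμ (ae_bdd_condExp_of_ae_bdd (m := m) h) ω
  rw [Real.coe_toNNReal'] at this
  exact (abs_le.1 this).2

lemma condexp_stopping_eq_at [IsFiniteMeasure μ] (hμ : ∀ ω : Ω, μ {ω} ≠ 0)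
    {𝓕 : Filtration ℝ≥0∞ mΩ} {ν : Ω → ℝ≥0∞} (hν : IsStoppingTime 𝓕 (fun ω => (ν ω : WithTop ℝ≥0∞))) (f : Ω → ℝ)
    (t : ℝ≥0∞) {ω : Ω} (hω : ν ω = t) :
    (μ[f|hν.measurableSpace]) ω = (μ[f|𝓕 t]) ω := by
  have h := condExp_stopping_time_ae_eq_restrict_eq_of_countable_range (μ := μ) (f := f) hν
    (Set.countable_range _) t
  exact ae_restrict_all hμ
    (𝓕.le t _ (hν.measurableSet_eq_of_countable_range (Set.countable_range _) t)) h ω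
    (show ((ν ω : ℝ≥0∞) : WithTop ℝ≥0∞) = t by rw [hω])

/-! ### The grid time `ν` -/

lemma grid_ne_top {h : ℝ} {n : ℕ} : grid h n ≠ ∞ := ENNReal.ofReal_ne_top

lemma grid_mono {h : ℝ} (hh : 0 ≤ h) {m n : ℕ} (hmn : m ≤ n) : grid h m ≤ grid h n :=
  ENNReal.ofReal_le_ofReal (mul_le_mul_of_nonneg_right (by exact_mod_cast hmn) hh)

lemma grid_inj {h : ℝ} (hh : 0 < h) {m n : ℕ} (e : grid h m = grid h n) : m = n := by
  have h1 : (m : ℝ) * h = (n : ℝ) * h :=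
    (ENNReal.ofReal_eq_ofReal_iff (by positivity) (by positivity)).1 e
  have := mul_right_cancel₀ hh.ne' h1
  exact_mod_cast this

/-- The time `ν = (⌊τ/h⌋+1)h` (with `ν = ∞` iff `τ = ∞`). -/
def nuT (h : ℝ) (τ : Ω → ℝ≥0∞) : Ω → ℝ≥0∞ := fun ω =>
  if τ ω = ∞ then ∞ else grid h (gridIdx h (τ ω))

omit [Countable Ω] in
lemma le_nuT {h : ℝ} (hh : 0 < h) (τ : Ω → ℝ≥0∞) (ω : Ω) : τ ω ≤ nuT h τ ω := by
  unfold nuT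
  split_ifs with ht
  · simp [ht]
  · rw [grid, gridIdx, ENNReal.le_ofReal_iff_toReal_le ht (by positivity)]
    set x := (τ ω).toReal with hx
    have hx0 : 0 ≤ x := ENNReal.toReal_nonneg
    have h1 : x / h < ⌊x / h⌋₊ + 1 := Nat.lt_floor_add_one _
    have h2 : x < (⌊x / h⌋₊ + 1 : ℝ) * h := by
      rw [div_lt_iff₀ hh] at h1
      linarith
    push_cast
    linarith

omit [Countable Ω] in
lemma nuT_sub_le {h : ℝ} (hh : 0 < h) (τ : Ω → ℝ≥0∞) (ω : Ω) :
    nuT h τ ω - τ ω ≤ ENNReal.ofReal h := by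
  unfold nuT
  split_ifs with ht
  · simp [ht]
  · rw [tsub_le_iff_right]
    conv_lhs => rw [grid, gridIdx]
    rw [← ENNReal.ofReal_toReal ht, ← ENNReal.ofReal_add hh.le ENNReal.toReal_nonneg]
    apply ENNReal.ofReal_le_ofReal
    set x := (τ ω).toReal with hx
    have hx0 : 0 ≤ x := ENNReal.toReal_nonneg
    have h1 : (⌊x / h⌋₊ : ℝ) ≤ x / h := Nat.floor_le (by positivity)
    have h2 : (⌊x / h⌋₊ : ℝ) * h ≤ x := (le_div_iff₀ hh).1 h1
    rw [ENNReal.toReal_ofReal hx0]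
    push_cast
    nlinarith [h2]

omit [Countable Ω] in
lemma nuT_eq_top_iff {h : ℝ} {τ : Ω → ℝ≥0∞} {ω : Ω} : nuT h τ ω = ∞ ↔ τ ω = ∞ := by
  unfold nuT
  split_ifs with ht
  · simp [ht]
  · simp [ht, grid_ne_top]

omit [Countable Ω] in
lemma gridIdx_char {h : ℝ} (hh : 0 < h) {a : ℝ≥0∞} (ha : a ≠ ∞) {n : ℕ} :
    gridIdx h a = n + 1 ↔ a < grid h (n + 1) ∧ ¬ a < grid h n := by
  set x := a.toReal with hx
  have hx0 : 0 ≤ x := ENNReal.toReal_nonneg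
  have e1 : a < grid h (n + 1) ↔ x < ((n : ℝ) + 1) * h := by
    rw [grid, ENNReal.lt_ofReal_iff_toReal_lt ha]
    push_cast
    rfl
  have e2 : ¬ a < grid h n ↔ (n : ℝ) * h ≤ x := by
    rw [not_lt, grid, ENNReal.ofReal_le_iff_le_toReal ha]
  rw [e1, e2, gridIdx, Nat.add_right_cancel_iff, Nat.floor_eq_iff (by positivity)]
  rw [le_div_iff₀ hh, div_lt_iff₀ hh]
  constructor
  · rintro ⟨h1, h2⟩
    exact ⟨by linarith, by linarith⟩
  · rintro ⟨h1, h2⟩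
    exact ⟨by linarith, by linarith⟩

omit [Countable Ω] in
lemma nuT_eq_grid_iff {h : ℝ} (hh : 0 < h) {τ : Ω → ℝ≥0∞} {ω : Ω} {n : ℕ} :
    nuT h τ ω = grid h (n + 1) ↔ τ ω < grid h (n + 1) ∧ ¬ τ ω < grid h n := by
  by_cases ht : τ ω = ∞
  · simp only [nuT, if_pos ht, ht]
    simp [eq_comm, grid_ne_top, not_lt, le_top, (lt_irrefl _ : ¬ (∞:ℝ≥0∞) < ∞), grid_ne_top.lt_top.ne]
  · rw [nuT, if_neg ht, ← gridIdx_char hh ht]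
    constructor
    · intro e
      exact grid_inj hh e
    · intro e
      rw [e]

omit [Countable Ω] in
lemma gridIdx_of_nuT_eq {h : ℝ} (hh : 0 < h) {τ : Ω → ℝ≥0∞} {ω : Ω} {n : ℕ}
    (e : nuT h τ ω = grid h (n + 1)) : τ ω ≠ ∞ ∧ gridIdx h (τ ω) = n + 1 := by
  have ht : τ ω ≠ ∞ := by
    intro h'
    rw [nuT, if_pos h'] at e
    exact grid_ne_top e.symm
  refine ⟨ht, ?_⟩
  rw [nuT, if_neg ht] at e
  exact grid_inj hh e

omit [Countable Ω] in
lemma exists_nuT_eq_grid {h : ℝ} {τ : Ω → ℝ≥0∞} {ω : Ω} (ht : τ ω ≠ ∞) :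
    ∃ n : ℕ, nuT h τ ω = grid h (n + 1) := by
  refine ⟨gridIdx h (τ ω) - 1, ?_⟩
  rw [nuT, if_neg ht]
  congr 1

lemma measurable_nuT_eq {h : ℝ} (hh : 0 < h) {𝓕 : Filtration ℝ≥0∞ mΩ} {τ : Ω → ℝ≥0∞}
    (hτ : IsStoppingTime 𝓕 (fun ω => (τ ω : WithTop ℝ≥0∞))) (n : ℕ) :
    MeasurableSet[𝓕 (grid h (n + 1))] {ω | nuT h τ ω = grid h (n + 1)} := by
  have : {ω | nuT h τ ω = grid h (n + 1)} =
      {ω | τ ω < grid h (n + 1)} \ {ω | τ ω < grid h n} := by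
    ext ω
    simp only [Set.mem_setOf_eq, Set.mem_diff, nuT_eq_grid_iff hh]
  rw [this]
  have h1 := hτ.measurableSet_lt_of_countable_range (Set.countable_range _) (grid h (n + 1))
  have h2 := hτ.measurableSet_lt_of_countable_range (Set.countable_range _) (grid h n)
  simp only [WithTop.coe_lt_coe] at h1 h2
  exact h1.diff (𝓕.mono (grid_mono hh.le n.le_succ) _ h2)

lemma nuT_isStoppingTime {h : ℝ} (hh : 0 < h) {𝓕 : Filtration ℝ≥0∞ mΩ} {τ : Ω → ℝ≥0∞}
    (hτ : IsStoppingTime 𝓕 (fun ω => (τ ω : WithTop ℝ≥0∞))) :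
    IsStoppingTime 𝓕 (fun ω => (nuT h τ ω : WithTop ℝ≥0∞)) := by
  intro s
  simp only [WithTop.coe_le_coe]
  by_cases hs : s = ∞
  · subst hs
    have : {ω | nuT h τ ω ≤ ∞} = Set.univ := by
      ext ω; simp [le_top]
    rw [this]
    exact MeasurableSet.univ
  · have : {ω | nuT h τ ω ≤ s} =
        ⋃ n : ℕ, if grid h (n + 1) ≤ s then {ω | nuT h τ ω = grid h (n + 1)} else ∅ := by
      ext ω
      simp only [Set.mem_setOf_eq, Set.mem_iUnion]
      constructor
      · intro hle
        have ht : τ ω ≠ ∞ := by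
          intro h'
          rw [nuT, if_pos h'] at hle
          exact hs (top_le_iff.1 hle)
        obtain ⟨n, hn⟩ := exists_nuT_eq_grid (h := h) ht
        refine ⟨n, ?_⟩
        rw [if_pos (hn ▸ hle)]
        exact hn
      · rintro ⟨n, hn⟩
        by_cases hc : grid h (n + 1) ≤ s
        · rw [if_pos hc] at hn
          exact le_of_eq_of_le hn hc
        · rw [if_neg hc] at hn
          exact absurd hn (Set.notMem_empty ω)
    rw [this]
    refine MeasurableSet.iUnion fun n => ?_
    split_ifs with hc
    · exact 𝓕.mono hc _ (measurable_nuT_eq hh hτ n)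
    · exact @MeasurableSet.empty _ (𝓕 s)

omit [Countable Ω] in
lemma evalAt_gridStrat_eq {h : ℝ} (bar : ℕ → Ω → ℝ≥0∞) (τ : Ω → ℝ≥0∞) (ω : Ω) :
    evalAt (gridStrat h bar) τ ω = if τ ω = ∞ then ∞ else bar (gridIdx h (τ ω)) ω := rfl

lemma rho_isStoppingTime {h : ℝ} (hh : 0 < h) {𝓕 : Filtration ℝ≥0∞ mΩ} {τ : Ω → ℝ≥0∞}
    (hτ : IsStoppingTime 𝓕 (fun ω => (τ ω : WithTop ℝ≥0∞))) {bar : ℕ → Ω → ℝ≥0∞}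
    (hbar : ∀ n, IsStoppingTime 𝓕 (fun ω => (bar n ω : WithTop ℝ≥0∞)))
    (hbarge : ∀ n ω, grid h n ≤ bar n ω) :
    IsStoppingTime 𝓕 (fun ω => (evalAt (gridStrat h bar) τ ω : WithTop ℝ≥0∞)) := by
  intro s
  simp only [WithTop.coe_le_coe]
  by_cases hs : s = ∞
  · subst hs
    have : {ω | evalAt (gridStrat h bar) τ ω ≤ ∞} = Set.univ := by
      ext ω; simp [le_top]
    rw [this]
    exact MeasurableSet.univ
  · have : {ω | evalAt (gridStrat h bar) τ ω ≤ s} =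
        ⋃ n : ℕ, if grid h (n + 1) ≤ s then
          ({ω | nuT h τ ω = grid h (n + 1)} ∩ {ω | bar (n + 1) ω ≤ s}) else ∅ := by
      ext ω
      simp only [Set.mem_setOf_eq, Set.mem_iUnion, evalAt_gridStrat_eq]
      constructor
      · intro hle
        have ht : τ ω ≠ ∞ := by
          intro h'
          rw [if_pos h'] at hle
          exact hs (top_le_iff.1 hle)
        rw [if_neg ht] at hle
        obtain ⟨n, hn⟩ := exists_nuT_eq_grid (h := h) ht
        obtain ⟨-, hidx⟩ := gridIdx_of_nuT_eq hh hn
        have hgs : grid h (n + 1) ≤ s := le_trans (hbarge (n + 1) ω) (hidx ▸ hle)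
        refine ⟨n, ?_⟩
        rw [if_pos hgs]
        exact ⟨hn, by rw [← hidx]; exact hle⟩
      · rintro ⟨n, hn⟩
        by_cases hc : grid h (n + 1) ≤ s
        · rw [if_pos hc] at hn
          obtain ⟨hn1, hn2⟩ := hn
          obtain ⟨ht, hidx⟩ := gridIdx_of_nuT_eq hh hn1
          rw [if_neg ht, hidx]
          exact hn2
        · rw [if_neg hc] at hn
          exact absurd hn (Set.notMem_empty ω)
    rw [this]
    refine MeasurableSet.iUnion fun n => ?_
    split_ifs with hc
    · exact (𝓕.mono hc _ (measurable_nuT_eq hh hτ n)).inter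
        (by simpa only [WithTop.coe_le_coe] using hbar (n + 1) s)
    · exact @MeasurableSet.empty _ (𝓕 s)

omit [Countable Ω] in
lemma nuT_le_rho {h : ℝ} (hh : 0 < h) {τ : Ω → ℝ≥0∞} {bar : ℕ → Ω → ℝ≥0∞}
    (hbarge : ∀ n ω, grid h n ≤ bar n ω) (ω : Ω) :
    nuT h τ ω ≤ evalAt (gridStrat h bar) τ ω := by
  rw [evalAt_gridStrat_eq, nuT]
  split_ifs with ht
  · exact le_rfl
  · exact hbarge _ ω

end Aux

/-- the estimate in the proof of Lemma 3.2: for every `ε > 0`, `h > 0` and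
every stopping time `τ₀`, `|Y_{τ₀} − E[U(ρ_h(τ₀), τ₀) | 𝓕_{τ₀}]| ≤ 3r(h) + ε` a.s. -/
theorem Y_grid_estimate [Countable Ω] (μ : Measure Ω) [IsProbabilityMeasure μ]
    (𝓕 : Filtration ℝ≥0∞ mΩ) (hsetup : UsualSetup μ 𝓕)
    (U : ℝ≥0∞ → ℝ≥0∞ → Ω → ℝ) (r : ℝ≥0∞ → ℝ) (hU : PayoffAssumption 𝓕 U r)
    (ε h : ℝ) (hε : 0 < ε) (hh : 0 < h)
    (ρbar : ℕ → Ω → ℝ≥0∞) (hopt : IsOptRho1 μ 𝓕 U ε h ρbar)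
    (τ₀ : Ω → ℝ≥0∞) (hτ₀ : IsStoppingTime 𝓕 (fun ω => (τ₀ ω : WithTop ℝ≥0∞))) :
    ∀ᵐ ω ∂μ,
      |(⨆ σ : STge 𝓕 τ₀, (μ[fun ω' => U (σ.1 ω') (τ₀ ω') ω' | hτ₀.measurableSpace]) ω) -
        (μ[fun ω' => U (evalAt (gridStrat h ρbar) τ₀ ω') (τ₀ ω') ω' |
          hτ₀.measurableSpace]) ω|
      ≤ 3 * r (ENNReal.ofReal h) + ε := by
  classical
  obtain ⟨hμ, -, -, -⟩ := hsetup
  obtain ⟨⟨M, hM⟩, hU2, hrmono, hrnn, -, -, -, hmod⟩ := hU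
  set rh := r (ENNReal.ofReal h) with hrhdef
  have hrh0 : 0 ≤ rh := hrnn _
  -- modulus moves
  have hUmove1 : ∀ s s' t : ℝ≥0∞, dd s s' ≤ ENNReal.ofReal h → ∀ ω,
      U s t ω ≤ U s' t ω + rh := by
    intro s s' t hss ω
    have h1 := hmod s t s' t ω
    have h0 : dd t t = 0 := by simp [dd]
    rw [h0, add_zero] at h1
    have h2 := (abs_le.1 h1).2
    have h3 := hrmono hss
    rw [hrhdef]
    linarith
  have hUmove2 : ∀ s t t' : ℝ≥0∞, dd t t' ≤ ENNReal.ofReal h → ∀ ω,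
      U s t ω ≤ U s t' ω + rh := by
    intro s t t' htt ω
    have h1 := hmod s t s t' ω
    have h0 : dd s s = 0 := by simp [dd]
    rw [h0, zero_add] at h1
    have h2 := (abs_le.1 h1).2
    have h3 := hrmono htt
    rw [hrhdef]
    linarith
  -- the main players
  set ν : Ω → ℝ≥0∞ := nuT h τ₀ with hνdef
  have hνST : IsStoppingTime 𝓕 (fun ω => (ν ω : WithTop ℝ≥0∞)) := nuT_isStoppingTime hh hτ₀
  set ρ : Ω → ℝ≥0∞ := evalAt (gridStrat h ρbar) τ₀ with hρdef
  have hbar : ∀ n, IsStoppingTime 𝓕 (fun ω => (ρbar n ω : WithTop ℝ≥0∞)) := fun n => (hopt n).1.1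
  have hbarge : ∀ n ω, grid h n ≤ ρbar n ω := fun n => (hopt n).1.2
  have hρST : IsStoppingTime 𝓕 (fun ω => (ρ ω : WithTop ℝ≥0∞)) := rho_isStoppingTime hh hτ₀ hbar hbarge
  have hτleν : ∀ ω, τ₀ ω ≤ ν ω := le_nuT hh τ₀
  have hνleρ : ∀ ω, ν ω ≤ ρ ω := nuT_le_rho hh hbarge
  have hτleρ : ∀ ω, τ₀ ω ≤ ρ ω := fun ω => (hτleν ω).trans (hνleρ ω)
  -- σ-algebras
  have hmτ : hτ₀.measurableSpace ≤ mΩ :=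
    hτ₀.measurableSpace_le
  have hmν : hνST.measurableSpace ≤ mΩ :=
    hνST.measurableSpace_le
  have hmτν : hτ₀.measurableSpace ≤ hνST.measurableSpace :=
    hτ₀.measurableSpace_mono hνST (fun ω => WithTop.coe_le_coe.2 (hτleν ω))
  haveI : SigmaFinite (μ.trim hmτ) := by infer_instance
  haveI : SigmaFinite (μ.trim hmν) := by infer_instance
  -- integrability
  have hint : ∀ f g : Ω → ℝ≥0∞, (∀ a, MeasurableSet {ω | f ω = a}) →
      (∀ b, MeasurableSet {ω | g ω = b}) →
      Integrable (fun ω => U (f ω) (g ω) ω) μ := fun f g hf hg =>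
    integrable_of_bdd (meas_comp hU2 hf hg) fun ω => hM _ _ ω
  have hmemτ := st_eq_meas hτ₀
  have hmemν := st_eq_meas hνST
  have hmemρ := st_eq_meas hρST
  -- bounded suprema
  have hbddτ : ∀ ω : Ω, BddAbove (Set.range fun σ : STge 𝓕 τ₀ =>
      (μ[fun ω' => U (σ.1 ω') (τ₀ ω') ω'|hτ₀.measurableSpace]) ω) := by
    intro ω
    refine ⟨max M 0, ?_⟩
    rintro x ⟨σ, rfl⟩
    exact condexp_bdd hμ (fun ω' => hM _ _ ω') ω
  have hbddY : ∀ (t : ℝ≥0∞) (ω : Ω), BddAbove (Set.range fun σ : STge 𝓕 (fun _ => t) =>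
      (μ[fun ω' => U (σ.1 ω') t ω'|𝓕 t]) ω) := by
    intro t ω
    refine ⟨max M 0, ?_⟩
    rintro x ⟨σ, rfl⟩
    exact condexp_bdd hμ (fun ω' => hM _ _ ω') ω
  haveI hne : Nonempty (STge 𝓕 τ₀) := ⟨⟨τ₀, hτ₀, fun _ => le_rfl⟩⟩
  -- easy direction
  have heasy : ∀ ω, (μ[fun ω' => U (ρ ω') (τ₀ ω') ω'|hτ₀.measurableSpace]) ω ≤
      ⨆ σ : STge 𝓕 τ₀, (μ[fun ω' => U (σ.1 ω') (τ₀ ω') ω'|hτ₀.measurableSpace]) ω :=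
    fun ω => le_ciSup (hbddτ ω) (⟨ρ, hρST, hτleρ⟩ : STge 𝓕 τ₀)
  -- hard direction
  have key : ∀ σ : STge 𝓕 τ₀, ∀ ω,
      (μ[fun ω' => U (σ.1 ω') (τ₀ ω') ω'|hτ₀.measurableSpace]) ω ≤
      (μ[fun ω' => U (ρ ω') (τ₀ ω') ω'|hτ₀.measurableSpace]) ω + (3 * rh + ε) := by
    rintro ⟨σ, hσST, hσge⟩
    set σν : Ω → ℝ≥0∞ := fun ω' => max (σ ω') (ν ω') with hσνdef
    have hσνST : IsStoppingTime 𝓕 (fun ω => (σν ω : WithTop ℝ≥0∞)) := hσST.max hνST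
    set f1 : Ω → ℝ := fun ω' => U (σ ω') (τ₀ ω') ω' with hf1
    set f2 : Ω → ℝ := fun ω' => U (σν ω') (ν ω') ω' with hf2
    set f3 : Ω → ℝ := fun ω' => U (ρ ω') (ν ω') ω' with hf3
    set f4 : Ω → ℝ := fun ω' => U (ρ ω') (τ₀ ω') ω' with hf4
    have hif1 : Integrable f1 μ := hint _ _ (st_eq_meas hσST) hmemτ
    have hif2 : Integrable f2 μ := hint _ _ (st_eq_meas hσνST) hmemν
    have hif3 : Integrable f3 μ := hint _ _ hmemρ hmemν
    have hif4 : Integrable f4 μ := hint _ _ hmemρ hmemτ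
    -- dd facts
    have hddτν : ∀ ω', dd (τ₀ ω') (ν ω') ≤ ENNReal.ofReal h := by
      intro ω'
      have : dd (τ₀ ω') (ν ω') = ν ω' - τ₀ ω' := by
        rw [dd, tsub_eq_zero_of_le (hτleν ω'), zero_add]
      rw [this]
      exact nuT_sub_le hh τ₀ ω'
    have hddσ : ∀ ω', dd (σ ω') (σν ω') ≤ ENNReal.ofReal h := by
      intro ω'
      have h1 : dd (σ ω') (σν ω') = σν ω' - σ ω' := by
        rw [dd, tsub_eq_zero_of_le (le_max_left _ _), zero_add]
      rw [h1]
      rcases le_total (ν ω') (σ ω') with hc | hc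
      · rw [hσνdef]
        simp only [max_eq_left hc, tsub_self]
        exact zero_le
      · rw [hσνdef]
        simp only [max_eq_right hc]
        exact le_trans (tsub_le_tsub_left (hσge ω') _) (nuT_sub_le hh τ₀ ω')
    -- step A
    have stepA : ∀ ω, (μ[f1|hτ₀.measurableSpace]) ω ≤
        (μ[f2|hτ₀.measurableSpace]) ω + (rh + rh) := by
      refine condexp_le_add_const hμ hmτ hif1 hif2 fun ω' => ?_
      have a1 := hUmove1 (σ ω') (σν ω') (τ₀ ω') (hddσ ω') ω'
      have a2 := hUmove2 (σν ω') (τ₀ ω') (ν ω') (hddτν ω') ω'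
      simp only [hf1, hf2]
      linarith
    -- step C
    have stepC : ∀ ω, (μ[f2|hνST.measurableSpace]) ω ≤
        (μ[f3|hνST.measurableSpace]) ω + ε := by
      intro ω
      by_cases htop : τ₀ ω = ∞
      · have hset : MeasurableSet[hνST.measurableSpace] {x | ν x = ∞} :=
          by
            have := hνST.measurableSet_eq_of_countable_range' (Set.countable_range _) ∞
            simpa only [WithTop.coe_eq_coe] using this
        have heqon : ∀ x ∈ {x | ν x = ∞}, f2 x = f3 x := by
          intro x hx
          have hτx : τ₀ x = ∞ := nuT_eq_top_iff.1 hx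
          have hσx : σ x = ∞ := top_le_iff.1 (hτx ▸ hσge x)
          have hρx : ρ x = ∞ := by
            rw [hρdef, evalAt_gridStrat_eq, if_pos hτx]
          have hσνx : σν x = ∞ := by simp [hσνdef, hσx]
          simp only [hf2, hf3, hσνx, hρx, hx]
        have hωmem : ν ω = ∞ := nuT_eq_top_iff.2 htop
        have := condexp_eq_on hμ hmν hif2 hif3 hset heqon ω hωmem
        rw [this]
        linarith
      · obtain ⟨n, hn⟩ := exists_nuT_eq_grid (h := h) htop
        set t : ℝ≥0∞ := grid h (n + 1) with htdef
        have hωE : ν ω = t := hn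
        have hEmeasF : MeasurableSet[𝓕 t] {x | ν x = t} := measurable_nuT_eq hh hτ₀ n
        have c1 : (μ[f2|hνST.measurableSpace]) ω = (μ[f2|𝓕 t]) ω :=
          condexp_stopping_eq_at hμ hνST f2 t hωE
        have c6 : (μ[f3|𝓕 t]) ω = (μ[f3|hνST.measurableSpace]) ω :=
          (condexp_stopping_eq_at hμ hνST f3 t hωE).symm
        set σ' : Ω → ℝ≥0∞ := fun ω' => max (σν ω') t with hσ'def
        have hσ'ST : IsStoppingTime 𝓕 (fun ω => (σ' ω : WithTop ℝ≥0∞)) := hσνST.max_const t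
        set g2 : Ω → ℝ := fun ω' => U (σ' ω') t ω' with hg2
        have hig2 : Integrable g2 μ := hint _ _ (st_eq_meas hσ'ST)
          (st_eq_meas (τ := fun _ => t) (isStoppingTime_const 𝓕 t))
        set g3 : Ω → ℝ := fun ω' => U (ρbar (n + 1) ω') t ω' with hg3
        have hig3 : Integrable g3 μ := hint _ _ (st_eq_meas (hbar (n + 1)))
          (st_eq_meas (τ := fun _ => t) (isStoppingTime_const 𝓕 t))
        have c2 : (μ[f2|𝓕 t]) ω = (μ[g2|𝓕 t]) ω := by
          refine condexp_eq_on hμ (𝓕.le t) hif2 hig2 hEmeasF (fun x hx => ?_) ω hωE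
          have hxE : ν x = t := hx
          have h1 : σ' x = σν x := max_eq_left (hxE ▸ le_max_right (σ x) (ν x))
          simp only [hf2, hg2, h1, hxE]
        have hσ'mem : σ' ∈ STge 𝓕 (fun _ => t) := ⟨hσ'ST, fun x => le_max_right _ _⟩
        have c3 : (μ[g2|𝓕 t]) ω ≤ Y1v μ 𝓕 U t ω :=
          le_ciSup (hbddY t ω) (⟨σ', hσ'mem⟩ : STge 𝓕 (fun _ => t))
        have c4 : Y1v μ 𝓕 U t ω - ε ≤ (μ[g3|𝓕 t]) ω := by
          have := ae_all hμ (hopt (n + 1)).2 ω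
          exact this
        have c5 : (μ[g3|𝓕 t]) ω = (μ[f3|𝓕 t]) ω := by
          refine condexp_eq_on hμ (𝓕.le t) hig3 hif3 hEmeasF (fun x hx => ?_) ω hωE
          obtain ⟨hxfin, hxidx⟩ := gridIdx_of_nuT_eq hh hx
          have hρx : ρ x = ρbar (n + 1) x := by
            rw [hρdef, evalAt_gridStrat_eq, if_neg hxfin, hxidx]
          have hxE : ν x = t := hx
          simp only [hg3, hf3, hρx, hxE]
        rw [c1, c2, ← c6, ← c5]
        linarith [c3, c4]
    -- towers and conclusion
    have tower2 : ∀ ω, (μ[f2|hτ₀.measurableSpace]) ω =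
        (μ[μ[f2|hνST.measurableSpace]|hτ₀.measurableSpace]) ω :=
      ae_all hμ (condExp_condExp_of_le hmτν hmν).symm
    have tower3 : ∀ ω, (μ[μ[f3|hνST.measurableSpace]|hτ₀.measurableSpace]) ω =
        (μ[f3|hτ₀.measurableSpace]) ω :=
      ae_all hμ (condExp_condExp_of_le hmτν hmν)
    have stepD : ∀ ω, (μ[μ[f2|hνST.measurableSpace]|hτ₀.measurableSpace]) ω ≤
        (μ[μ[f3|hνST.measurableSpace]|hτ₀.measurableSpace]) ω + ε :=
      condexp_le_add_const hμ hmτ integrable_condExp integrable_condExp stepC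
    have stepE : ∀ ω, (μ[f3|hτ₀.measurableSpace]) ω ≤
        (μ[f4|hτ₀.measurableSpace]) ω + rh := by
      refine condexp_le_add_const hμ hmτ hif3 hif4 fun ω' => ?_
      have : dd (ν ω') (τ₀ ω') ≤ ENNReal.ofReal h := by
        have h1 : dd (ν ω') (τ₀ ω') = ν ω' - τ₀ ω' := by
          rw [dd, tsub_eq_zero_of_le (hτleν ω'), add_zero]
        rw [h1]
        exact nuT_sub_le hh τ₀ ω'
      exact hUmove2 (ρ ω') (ν ω') (τ₀ ω') this ω'
    intro ω
    have := stepA ω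
    rw [tower2 ω] at this
    have h2 := (this.trans (by linarith [stepD ω] :
      (μ[μ[f2|hνST.measurableSpace]|hτ₀.measurableSpace]) ω + (rh + rh) ≤
      (μ[μ[f3|hνST.measurableSpace]|hτ₀.measurableSpace]) ω + (rh + rh) + ε))
    rw [tower3 ω] at h2
    have h3 := stepE ω
    linarith
  -- conclusion
  refine Eventually.of_forall fun ω => ?_
  have hup : (⨆ σ : STge 𝓕 τ₀, (μ[fun ω' => U (σ.1 ω') (τ₀ ω') ω'|hτ₀.measurableSpace]) ω) ≤
      (μ[fun ω' => U (ρ ω') (τ₀ ω') ω'|hτ₀.measurableSpace]) ω + (3 * rh + ε) :=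
    ciSup_le fun σ => key σ ω
  have hdown := heasy ω
  rw [abs_le]
  constructor <;> [linarith; linarith]

end StoppingGames
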